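/- arXiv:2302.07063 — 2 statements merged into one kernel-verified Lean document; each statement's English description precedes it below -/
import Mathlib

section
/- Let n,d,k be positive integers with d ≤ n. Then H_ESR^R(n,d,k) = H_AD^R(n,d,k) = H_EAD^R(n,d,k) = H_AD(n,d,k) = H_AR(n,d,k) = H_ESR(n,d,k) = H_EAD(n,d,k) = H_EAR(n,d,k) = n. -/
open scoped Classical
noncomputable section

/-- Attributes are natural numbers. -/
abbrev Attr := ℕ
/-- A value in an equation system: `some δ` is a number, `none` is the special symbol `*`. -/
abbrev Val := Option ℕ
/-- A decision rule: left-hand side (set of equations attribute = numeric value) and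
right-hand side (decision). -/
abbrev Rule := Finset (Attr × ℕ) × ℕ
/-- An equation system over attributes with possibly `*` values. -/
abbrev EqSys := Finset (Attr × Val)
/-- A decision rule system. -/
abbrev DRS := Finset Rule

/-- The equation system `K(r)` of a rule. -/
def Kr (r : Rule) : EqSys := r.1.image fun p => (p.1, some p.2)
/-- The set `A(r)` of attributes of a rule. -/
def Ar (r : Rule) : Finset Attr := r.1.image Prod.fst
/-- The length of a rule. -/
def ruleLen (r : Rule) : ℕ := r.1.card
/-- Well-formed rule: attributes in the left-hand side are pairwise different. -/
def WFRule (r : Rule) : Prop := ∀ p ∈ r.1, ∀ q ∈ r.1, p.1 = q.1 → p.2 = q.2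
/-- Well-formed decision rule system: a finite nonempty set of well-formed rules. -/
def WFS (S : DRS) : Prop := S.Nonempty ∧ ∀ r ∈ S, WFRule r

/-- `A(S)`: attributes of a system. -/
def AS (S : DRS) : Finset Attr := S.biUnion Ar
/-- `n(S) = |A(S)|`. -/
def nS (S : DRS) : ℕ := (AS S).card
/-- `d(S)`: the maximum length of a rule in `S`. -/
def dS (S : DRS) : ℕ := S.sup ruleLen
/-- `V_S(a)`: values of attribute `a` occurring in `S`. -/
def VS (S : DRS) (a : Attr) : Finset ℕ :=
  S.biUnion fun r => (r.1.filter fun p => p.1 = a).image Prod.snd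
/-- `k(S)`: maximum number of values of a single attribute. -/
def kS (S : DRS) : ℕ := (AS S).sup fun a => (VS S a).card

/-- Branching sets of o-decision trees: `V_S(a)`. -/
def Bo (S : DRS) (a : Attr) : Finset Val := (VS S a).image some
/-- Branching sets of e-decision trees: `EV_S(a) = V_S(a) ∪ {*}`. -/
def Be (S : DRS) (a : Attr) : Finset Val := insert none (Bo S a)

/-- Consistency of an equation system. -/
def Consistent (K : EqSys) : Prop := ∀ p ∈ K, ∀ q ∈ K, p.1 = q.1 → p.2 = q.2

/-- Decision trees: terminal nodes labeled with sets of rules, working nodes labeled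
with an attribute and having a child for each possible value (only children whose
labels lie in the relevant branching set are meaningful). -/
inductive DTree where
  | leaf : DRS → DTree
  | node : Attr → (Val → DTree) → DTree

/-- Depth of a decision tree with respect to branching sets `B`. -/
def depthT (B : Attr → Finset Val) : DTree → ℕ
  | .leaf _ => 0
  | .node a c => ((B a).sup fun v => depthT B (c v)) + 1

/-- A decision tree over a system `S` (with branching sets `B`). -/
def TreeOver (B : Attr → Finset Val) (S : DRS) : DTree → Prop
  | .leaf Z => Z ⊆ S
  | .node a c => a ∈ AS S ∧ ∀ v ∈ B a, TreeOver B S (c v)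

/-- `PathT B Γ K Z`: there is a complete path in `Γ` (following edges with labels
in the branching sets `B`) with equation system `K` and terminal label `Z`. -/
inductive PathT (B : Attr → Finset Val) : DTree → EqSys → DRS → Prop
  | leaf (Z : DRS) : PathT B (.leaf Z) ∅ Z
  | node (a : Attr) (c : Val → DTree) (v : Val) (K : EqSys) (Z : DRS) :
      v ∈ B a → PathT B (c v) K Z → PathT B (.node a c) (insert (a, v) K) Z

/-- `Γ` solves the problem given by correctness condition `cond` on (K(ξ), τ(ξ)). -/
def Solves (cond : EqSys → DRS → Prop) (B : Attr → Finset Val) (Γ : DTree) : Prop :=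
  ∀ K Z, PathT B Γ K Z → Consistent K → cond K Z

/-- Correctness condition for the All Rules problem. -/
def CondAR (S : DRS) (K : EqSys) (Z : DRS) : Prop :=
  (∀ r ∈ Z, Kr r ⊆ K) ∧ ∀ r ∈ S, r ∉ Z → ¬ Consistent (Kr r ∪ K)
/-- Correctness condition for the All Decisions problem. -/
def CondAD (S : DRS) (K : EqSys) (Z : DRS) : Prop :=
  (∀ r ∈ Z, Kr r ⊆ K) ∧ ∀ r ∈ S, r.2 ∉ Z.image Prod.snd → ¬ Consistent (Kr r ∪ K)
/-- Correctness condition for the Some Rules problem. -/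
def CondSR (S : DRS) (K : EqSys) (Z : DRS) : Prop :=
  (∀ r ∈ Z, Kr r ⊆ K) ∧ (Z = ∅ → ∀ r ∈ S, ¬ Consistent (Kr r ∪ K))

/-- Minimum depth of a decision tree over `S` solving the given problem. -/
def hgen (cond : DRS → EqSys → DRS → Prop) (B : DRS → Attr → Finset Val) (S : DRS) : ℕ :=
  sInf {m | ∃ Γ, TreeOver (B S) S Γ ∧ Solves (cond S) (B S) Γ ∧ depthT (B S) Γ = m}

def hAR (S : DRS) : ℕ := hgen CondAR Bo S
def hEAR (S : DRS) : ℕ := hgen CondAR Be S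
def hAD (S : DRS) : ℕ := hgen CondAD Bo S
def hEAD (S : DRS) : ℕ := hgen CondAD Be S
def hSR (S : DRS) : ℕ := hgen CondSR Bo S
def hESR (S : DRS) : ℕ := hgen CondSR Be S

/-- SR-reduced system. -/
def SRred (S : DRS) : Prop := ∀ r ∈ S, ¬ ∃ r' ∈ S, r'.1 ⊂ r.1
/-- AD-reduced system. -/
def ADred (S : DRS) : Prop := ∀ r ∈ S, ¬ ∃ r' ∈ S, r'.1 ⊂ r.1 ∧ r'.2 = r.2
/-- `R_SR(S)`. -/
def RSR (S : DRS) : DRS := S.filter fun r => ¬ ∃ r' ∈ S, r'.1 ⊂ r.1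
/-- `R_AD(S)`. -/
def RAD (S : DRS) : DRS := S.filter fun r => ¬ ∃ r' ∈ S, r'.1 ⊂ r.1 ∧ r'.2 = r.2

/-- `h_C(n,d,k)`: minimum of `h S` over systems with the given parameters. -/
def hmin (h : DRS → ℕ) (n d k : ℕ) : ℕ :=
  sInf {m | ∃ S, WFS S ∧ nS S = n ∧ dS S = d ∧ kS S = k ∧ h S = m}
/-- `H_C(n,d,k)`: maximum of `h S` over systems with the given parameters. -/
def Hmax (h : DRS → ℕ) (n d k : ℕ) : ℕ :=
  sSup {m | ∃ S, WFS S ∧ nS S = n ∧ dS S = d ∧ kS S = k ∧ h S = m}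
/-- `h_C^R(n,d,k)`: minimum of `h S` over reduced systems (`P`) with given parameters. -/
def hminR (h : DRS → ℕ) (P : DRS → Prop) (n d k : ℕ) : ℕ :=
  sInf {m | ∃ S, WFS S ∧ P S ∧ nS S = n ∧ dS S = d ∧ kS S = k ∧ h S = m}
/-- `H_C^R(n,d,k)`: maximum of `h S` over reduced systems (`P`) with given parameters. -/
def HmaxR (h : DRS → ℕ) (P : DRS → Prop) (n d k : ℕ) : ℕ :=
  sSup {m | ∃ S, WFS S ∧ P S ∧ nS S = n ∧ dS S = d ∧ kS S = k ∧ h S = m}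

/-- Node cover of the hypergraph `G(S)`. -/
def NodeCover (S : DRS) (B : Finset Attr) : Prop :=
  B ⊆ AS S ∧ ∀ r ∈ S, Ar r ≠ ∅ → (Ar r ∩ B).Nonempty
/-- `β(S)`: minimum cardinality of a node cover of `G(S)`. -/
def nodeCoverNum (S : DRS) : ℕ := sInf {m | ∃ B, NodeCover S B ∧ B.card = m}

/-- `I_SR(S)`. -/
def ISR (S : DRS) : DRS := if ∀ r ∈ S, r.1 ≠ ∅ then S else S.filter fun r => r.1 = ∅
/-- `D_0(S)`: right-hand sides of length-0 rules. -/
def D0 (S : DRS) : Finset ℕ := (S.filter fun r => r.1 = ∅).image Prod.snd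
/-- `I_AD(S)`. -/
def IAD (S : DRS) : DRS := S.filter fun r => r.1 = ∅ ∨ r.2 ∉ D0 S

/-- `K(S, δ̄)` for an assignment `f` of numeric values to all attributes of `S`. -/
def KStuple (S : DRS) (f : Attr → ℕ) : EqSys := (AS S).image fun a => (a, some (f a))
/-- An incomplete decision rule system. -/
def IncompleteS (S : DRS) : Prop :=
  ∃ f : Attr → ℕ, (∀ a ∈ AS S, f a ∈ VS S a) ∧ ∀ r ∈ S, ¬ Consistent (Kr r ∪ KStuple S f)

/-- `r_α`: remove from the left-hand side of `r` all equations belonging to `α`. -/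
def resRule (α : EqSys) (r : Rule) : Rule :=
  (r.1.filter fun p => (p.1, (some p.2 : Val)) ∉ α, r.2)
/-- `S_α`: rules `r_α` for the rules `r ∈ S` with `K(r) ∪ α` consistent. -/
def Sres (α : EqSys) (S : DRS) : DRS :=
  (S.filter fun r => Consistent (Kr r ∪ α)).image (resRule α)

/-- Value chosen at a node labeled by an attribute `a ∉ A(S_α)` when building `Γ_α`:
the `α`-value of `a` if `a` occurs in `α`, and the minimum number of `V_S(a)` otherwise. -/
def chooseVal (α : EqSys) (S : DRS) (a : Attr) : Val :=
  if h : ∃ v, (a, v) ∈ α then Classical.choose h else some (sInf {n : ℕ | n ∈ VS S a})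

/-- The decision tree `Γ_α`. -/
def resTree (α : EqSys) (S : DRS) : DTree → DTree
  | .leaf Z => .leaf (Sres α Z)
  | .node a c =>
      if a ∈ AS (Sres α S) then .node a fun v => resTree α S (c v)
      else resTree α S (c (chooseVal α S a))

/-- The o-decision tree `o(Γ)`: remove all nodes reachable only via an edge labeled `*`. -/
def oTree : DTree → DTree
  | .leaf Z => .leaf Z
  | .node a c => .node a fun v => match v with
      | none => .leaf ∅
      | some x => oTree (c (some x))
/-! ### Auxiliary material -/

section Aux

lemma mem_VS {S : DRS} {a : Attr} {x : ℕ} :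
    x ∈ VS S a ↔ ∃ r ∈ S, ∃ p ∈ r.1, p.1 = a ∧ p.2 = x := by
  simp [VS, Finset.mem_biUnion, Finset.mem_image, Finset.mem_filter]

lemma mem_AS {S : DRS} {a : Attr} :
    a ∈ AS S ↔ ∃ r ∈ S, ∃ p ∈ r.1, p.1 = a := by
  simp [AS, Ar, Finset.mem_biUnion, Finset.mem_image]

lemma mem_Kr {r : Rule} {q : Attr × Val} :
    q ∈ Kr r ↔ ∃ p ∈ r.1, q = (p.1, some p.2) := by
  simp [Kr, Finset.mem_image, eq_comm]

lemma Bo_nonempty {S : DRS} {a : Attr} (h : a ∈ AS S) : (Bo S a).Nonempty := by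
  rw [mem_AS] at h
  obtain ⟨r, hr, p, hp, rfl⟩ := h
  exact ⟨some p.2, by
    simp only [Bo, Finset.mem_image]
    exact ⟨p.2, mem_VS.2 ⟨r, hr, p, hp, rfl, rfl⟩, rfl⟩⟩

lemma Be_nonempty {S : DRS} {a : Attr} : (Be S a).Nonempty :=
  ⟨none, Finset.mem_insert_self _ _⟩

lemma some_mem_Bo {S : DRS} {a : Attr} {x : ℕ} (h : x ∈ VS S a) :
    (some x : Val) ∈ Bo S a := by
  simp only [Bo, Finset.mem_image]; exact ⟨x, h, rfl⟩

lemma some_mem_Be {S : DRS} {a : Attr} {x : ℕ} (h : x ∈ VS S a) :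
    (some x : Val) ∈ Be S a := Finset.mem_insert_of_mem (some_mem_Bo h)

/-- The full decision tree querying all attributes in `l`. -/
def fullTree (S : DRS) : List Attr → EqSys → DTree
  | [], K => .leaf (S.filter fun r => Kr r ⊆ K)
  | a :: t, K => .node a fun v => fullTree S t (insert (a, v) K)

lemma depth_fullTree {B : Attr → Finset Val} (S : DRS) :
    ∀ (l : List Attr), (∀ a ∈ l, (B a).Nonempty) → ∀ K,
      depthT B (fullTree S l K) = l.length := by
  intro l
  induction l with
  | nil => intro _ K; simp [fullTree, depthT]
  | cons a t ih =>
    intro h K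
    have hsup : ((B a).sup fun v => depthT B (fullTree S t (insert (a, v) K)))
        = t.length := by
      rw [Finset.sup_congr rfl (fun v _ => ih (fun b hb => h b (List.mem_cons_of_mem a hb)) _)]
      exact Finset.sup_const (h a List.mem_cons_self) _
    simp [fullTree, depthT, hsup]

lemma over_fullTree {B : Attr → Finset Val} (S : DRS) :
    ∀ (l : List Attr), (∀ a ∈ l, a ∈ AS S) → ∀ K,
      TreeOver B S (fullTree S l K) := by
  intro l
  induction l with
  | nil => intro _ K; simp only [fullTree, TreeOver]; exact Finset.filter_subset _ _
  | cons a t ih =>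
    intro h K
    simp only [fullTree, TreeOver]
    exact ⟨h a List.mem_cons_self,
      fun v _ => ih (fun b hb => h b (List.mem_cons_of_mem a hb)) _⟩

lemma path_fullTree {B : Attr → Finset Val} (S : DRS) :
    ∀ (l : List Attr) (K0 K : EqSys) (Z : DRS),
      PathT B (fullTree S l K0) K Z →
      Z = S.filter (fun r => Kr r ⊆ K ∪ K0) ∧ ∀ a ∈ l, ∃ v, (a, v) ∈ K := by
  intro l
  induction l with
  | nil =>
    intro K0 K Z h
    simp only [fullTree] at h
    cases h with
    | leaf Z => exact ⟨by simp, by simp⟩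
  | cons a t ih =>
    intro K0 K Z h
    simp only [fullTree] at h
    cases h with
    | node a c v K Z hv hp =>
      obtain ⟨hZ, hcov⟩ := ih (insert (a, v) K0) K Z hp
      constructor
      · rw [hZ]
        congr 1
        ext r
        have : insert (a, v) K ∪ K0 = K ∪ insert (a, v) K0 := by
          ext p; simp only [Finset.mem_insert, Finset.mem_union]; tauto
        rw [this]
      · intro b hb
        rcases List.mem_cons.1 hb with rfl | hb
        · exact ⟨v, Finset.mem_insert_self _ _⟩
        · obtain ⟨w, hw⟩ := hcov b hb
          exact ⟨w, Finset.mem_insert_of_mem hw⟩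

lemma refute {S : DRS} {K : EqSys} {r : Rule}
    (hall : ∀ a ∈ AS S, ∃ v, (a, v) ∈ K) (hr : r ∈ S) (hnot : ¬ Kr r ⊆ K) :
    ¬ Consistent (Kr r ∪ K) := by
  obtain ⟨q, hq, hqK⟩ := Finset.not_subset.1 hnot
  obtain ⟨p, hp, rfl⟩ := mem_Kr.1 hq
  obtain ⟨v, hv⟩ := hall p.1 (mem_AS.2 ⟨r, hr, p, hp, rfl⟩)
  intro hcons
  have := hcons (p.1, some p.2) (Finset.mem_union_left _ hq) (p.1, v)
    (Finset.mem_union_right _ hv) rfl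
  simp only at this
  exact hqK (this ▸ hv)

/-- `nS S` belongs to the set of achievable depths, for suitable conditions. -/
lemma nS_mem_hgenSet (cond : DRS → EqSys → DRS → Prop) (B : DRS → Attr → Finset Val)
    (S : DRS)
    (hc : ∀ K Z, Z = S.filter (fun r => Kr r ⊆ K) → (∀ a ∈ AS S, ∃ v, (a, v) ∈ K) →
      cond S K Z)
    (hB : ∀ a, a ∈ AS S → (B S a).Nonempty) :
    nS S ∈ {m | ∃ Γ, TreeOver (B S) S Γ ∧ Solves (cond S) (B S) Γ ∧ depthT (B S) Γ = m} := by
  refine ⟨fullTree S (AS S).toList ∅, ?_, ?_, ?_⟩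
  · exact over_fullTree S _ (fun a ha => Finset.mem_toList.1 ha) ∅
  · intro K Z hpath _
    obtain ⟨hZ, hcov⟩ := path_fullTree S _ _ _ _ hpath
    rw [Finset.union_empty] at hZ
    exact hc K Z hZ (fun a ha => hcov a (Finset.mem_toList.2 ha))
  · rw [depth_fullTree S _ (fun a ha => hB a (Finset.mem_toList.1 ha))]
    exact Finset.length_toList _

lemma hgen_le (cond : DRS → EqSys → DRS → Prop) (B : DRS → Attr → Finset Val) (S : DRS)
    (hc : ∀ K Z, Z = S.filter (fun r => Kr r ⊆ K) → (∀ a ∈ AS S, ∃ v, (a, v) ∈ K) →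
      cond S K Z)
    (hB : ∀ a, a ∈ AS S → (B S a).Nonempty) :
    hgen cond B S ≤ nS S :=
  Nat.sInf_le (nS_mem_hgenSet cond B S hc hB)

lemma hcAR (S : DRS) (K : EqSys) (Z : DRS) (hZ : Z = S.filter (fun r => Kr r ⊆ K))
    (hall : ∀ a ∈ AS S, ∃ v, (a, v) ∈ K) : CondAR S K Z := by
  subst hZ
  constructor
  · intro r hr; exact (Finset.mem_filter.1 hr).2
  · intro r hr hrZ
    exact refute hall hr (fun h => hrZ (Finset.mem_filter.2 ⟨hr, h⟩))

lemma hcAD (S : DRS) (K : EqSys) (Z : DRS) (hZ : Z = S.filter (fun r => Kr r ⊆ K))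
    (hall : ∀ a ∈ AS S, ∃ v, (a, v) ∈ K) : CondAD S K Z := by
  obtain ⟨h1, h2⟩ := hcAR S K Z hZ hall
  refine ⟨h1, fun r hr hrd => h2 r hr fun hrZ => hrd ?_⟩
  exact Finset.mem_image.2 ⟨r, hrZ, rfl⟩

lemma hcSR (S : DRS) (K : EqSys) (Z : DRS) (hZ : Z = S.filter (fun r => Kr r ⊆ K))
    (hall : ∀ a ∈ AS S, ∃ v, (a, v) ∈ K) : CondSR S K Z := by
  obtain ⟨h1, h2⟩ := hcAR S K Z hZ hall
  exact ⟨h1, fun hZe r hr => h2 r hr (by simp [hZe])⟩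

/-- Existence of a path following an adversary strategy maintaining `Good`. -/
lemma exists_path {B : Attr → Finset Val} {S : DRS} (Good : EqSys → Prop)
    (hstep : ∀ a ∈ AS S, ∀ K, Good K → ∃ v ∈ B a, Good (insert (a, v) K)) :
    ∀ Γ, TreeOver B S Γ → ∀ K0, Good K0 →
      ∃ K Z, PathT B Γ K Z ∧ Z ⊆ S ∧ Good (K ∪ K0) := by
  intro Γ
  induction Γ with
  | leaf Z =>
    intro h K0 hK0
    exact ⟨∅, Z, PathT.leaf Z, h, by simpa using hK0⟩
  | node a c ih =>
    intro h K0 hK0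
    obtain ⟨ha, hc⟩ := h
    obtain ⟨v, hv, hG⟩ := hstep a ha K0 hK0
    obtain ⟨K, Z, hp, hZ, hGood⟩ := ih v (hc v hv) (insert (a, v) K0) hG
    refine ⟨insert (a, v) K, Z, PathT.node a c v K Z hv hp, hZ, ?_⟩
    have : insert (a, v) K ∪ K0 = K ∪ insert (a, v) K0 := by
      ext p; simp only [Finset.mem_insert, Finset.mem_union]; tauto
    rw [this]
    exact hGood

lemma card_le_depth {B : Attr → Finset Val} {Γ : DTree} {K : EqSys} {Z : DRS}
    (h : PathT B Γ K Z) : K.card ≤ depthT B Γ := by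
  induction h with
  | leaf Z => simp [depthT]
  | node a c v K Z hv hp ih =>
    have h1 : (insert (a, v) K).card ≤ K.card + 1 := Finset.card_insert_le _ _
    have h2 : depthT B (c v) ≤ (B a).sup fun v => depthT B (c v) :=
      Finset.le_sup (f := fun v => depthT B (c v)) hv
    simp only [depthT]
    omega

lemma le_hgen (cond : DRS → EqSys → DRS → Prop) (B : DRS → Attr → Finset Val) (S : DRS)
    (N : ℕ) (Good : EqSys → Prop) (h0 : Good ∅)
    (hstep : ∀ a ∈ AS S, ∀ K, Good K → ∃ v ∈ B S a, Good (insert (a, v) K))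
    (hcons : ∀ K, Good K → Consistent K)
    (hcard : ∀ K Z, Good K → Z ⊆ S → cond S K Z → N ≤ K.card)
    (hne : {m | ∃ Γ, TreeOver (B S) S Γ ∧ Solves (cond S) (B S) Γ ∧
      depthT (B S) Γ = m}.Nonempty) :
    N ≤ hgen cond B S := by
  apply le_csInf hne
  rintro m ⟨Γ, hover, hsol, rfl⟩
  obtain ⟨K, Z, hp, hZ, hG⟩ := exists_path Good hstep Γ hover ∅ h0
  rw [Finset.union_empty] at hG
  exact le_trans (hcard K Z hG hZ (hsol K Z hp (hcons K hG))) (card_le_depth hp)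

end Aux

section Sys

/-- The long rule of the hard system. -/
def rr (d : ℕ) : Rule := ((Finset.range d).image fun j => (j, 0), 0)
/-- The singleton rules of the hard system. -/
def sR (i : ℕ) : Rule := ({(i, 0)}, i)
/-- The value-inflating rules of the hard system. -/
def tR (n m : ℕ) : Rule := ({(0, m)}, n + m)
/-- The hard system with parameters `n`, `d`, `k`. -/
def Sys (n d k : ℕ) : DRS :=
  insert (rr d) (((Finset.Ico d n).image sR) ∪ ((Finset.Ico 1 k).image (tR n)))

lemma mem_Sys {n d k : ℕ} {r : Rule} :
    r ∈ Sys n d k ↔ r = rr d ∨ (∃ i, d ≤ i ∧ i < n ∧ r = sR i) ∨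
      (∃ m, 1 ≤ m ∧ m < k ∧ r = tR n m) := by
  simp only [Sys, Finset.mem_insert, Finset.mem_union, Finset.mem_image, Finset.mem_Ico]
  constructor
  · rintro (h | ⟨i, ⟨h1, h2⟩, rfl⟩ | ⟨m, ⟨h1, h2⟩, rfl⟩)
    · exact Or.inl h
    · exact Or.inr (Or.inl ⟨i, h1, h2, rfl⟩)
    · exact Or.inr (Or.inr ⟨m, h1, h2, rfl⟩)
  · rintro (h | ⟨i, h1, h2, rfl⟩ | ⟨m, h1, h2, rfl⟩)
    · exact Or.inl h
    · exact Or.inr (Or.inl ⟨i, ⟨h1, h2⟩, rfl⟩)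
    · exact Or.inr (Or.inr ⟨m, ⟨h1, h2⟩, rfl⟩)

lemma rr_mem {n d k : ℕ} : rr d ∈ Sys n d k := Finset.mem_insert_self _ _

lemma sR_mem {n d k i : ℕ} (h1 : d ≤ i) (h2 : i < n) : sR i ∈ Sys n d k :=
  mem_Sys.2 (Or.inr (Or.inl ⟨i, h1, h2, rfl⟩))

lemma mem_rr1 {d : ℕ} {p : Attr × ℕ} : p ∈ (rr d).1 ↔ p.1 < d ∧ p.2 = 0 := by
  simp only [rr, Finset.mem_image, Finset.mem_range]
  constructor
  · rintro ⟨j, hj, rfl⟩; exact ⟨hj, rfl⟩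
  · rintro ⟨h1, h2⟩; exact ⟨p.1, h1, by rw [← h2]⟩

lemma mem_Kr_rr {d : ℕ} {q : Attr × Val} :
    q ∈ Kr (rr d) ↔ q.1 < d ∧ q.2 = some 0 := by
  rw [mem_Kr]
  constructor
  · rintro ⟨p, hp, rfl⟩; exact ⟨(mem_rr1.1 hp).1, by rw [(mem_rr1.1 hp).2]⟩
  · rintro ⟨h1, h2⟩
    exact ⟨(q.1, 0), mem_rr1.2 ⟨h1, rfl⟩, by
      cases q with
      | mk a v => simp at h2 ⊢; exact h2⟩

lemma Kr_sR {i : ℕ} : Kr (sR i) = {(i, (some 0 : Val))} := by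
  simp [Kr, sR]

lemma Kr_tR {n m : ℕ} : Kr (tR n m) = {(0, (some m : Val))} := by
  simp [Kr, tR]

lemma AS_Sys {n d k : ℕ} (hd : 1 ≤ d) (hdn : d ≤ n) :
    AS (Sys n d k) = Finset.range n := by
  ext a
  rw [mem_AS, Finset.mem_range]
  constructor
  · rintro ⟨r, hr, p, hp, rfl⟩
    rcases mem_Sys.1 hr with rfl | ⟨i, h1, h2, rfl⟩ | ⟨m, h1, h2, rfl⟩
    · exact lt_of_lt_of_le (mem_rr1.1 hp).1 hdn
    · simp only [sR, Finset.mem_singleton] at hp; rw [hp]; exact h2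
    · simp only [tR, Finset.mem_singleton] at hp; rw [hp]; omega
  · intro ha
    by_cases h : a < d
    · exact ⟨rr d, rr_mem, (a, 0), mem_rr1.2 ⟨h, rfl⟩, rfl⟩
    · exact ⟨sR a, sR_mem (not_lt.1 h) ha, (a, 0), Finset.mem_singleton_self _, rfl⟩

lemma nS_Sys {n d k : ℕ} (hd : 1 ≤ d) (hdn : d ≤ n) : nS (Sys n d k) = n := by
  rw [nS, AS_Sys hd hdn, Finset.card_range]

lemma ruleLen_rr {d : ℕ} : ruleLen (rr d) = d := by
  rw [ruleLen, rr, Finset.card_image_of_injective _ (fun a b h => by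
    simpa using congrArg Prod.fst h), Finset.card_range]

lemma dS_Sys {n d k : ℕ} (hd : 1 ≤ d) : dS (Sys n d k) = d := by
  apply le_antisymm
  · apply Finset.sup_le
    intro r hr
    rcases mem_Sys.1 hr with rfl | ⟨i, h1, h2, rfl⟩ | ⟨m, h1, h2, rfl⟩
    · exact le_of_eq ruleLen_rr
    · simpa [ruleLen, sR] using hd
    · simpa [ruleLen, tR] using hd
  · have := Finset.le_sup (f := ruleLen) (rr_mem (n := n) (d := d) (k := k))
    rwa [ruleLen_rr] at this

lemma mem_VS_Sys {n d k : ℕ} {a x : ℕ} :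
    x ∈ VS (Sys n d k) a ↔ (a < d ∧ x = 0) ∨ (d ≤ a ∧ a < n ∧ x = 0) ∨
      (a = 0 ∧ 1 ≤ x ∧ x < k) := by
  rw [mem_VS]
  constructor
  · rintro ⟨r, hr, p, hp, rfl, rfl⟩
    rcases mem_Sys.1 hr with rfl | ⟨i, h1, h2, rfl⟩ | ⟨m, h1, h2, rfl⟩
    · exact Or.inl ⟨(mem_rr1.1 hp).1, (mem_rr1.1 hp).2⟩
    · simp only [sR, Finset.mem_singleton] at hp
      subst hp; exact Or.inr (Or.inl ⟨h1, h2, rfl⟩)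
    · simp only [tR, Finset.mem_singleton] at hp
      subst hp; exact Or.inr (Or.inr ⟨rfl, h1, h2⟩)
  · rintro (⟨h1, rfl⟩ | ⟨h1, h2, rfl⟩ | ⟨rfl, h1, h2⟩)
    · exact ⟨rr d, rr_mem, (a, 0), mem_rr1.2 ⟨h1, rfl⟩, rfl, rfl⟩
    · exact ⟨sR a, sR_mem h1 h2, (a, 0), Finset.mem_singleton_self _, rfl, rfl⟩
    · exact ⟨tR n x, mem_Sys.2 (Or.inr (Or.inr ⟨x, h1, h2, rfl⟩)),
        (0, x), Finset.mem_singleton_self _, rfl, rfl⟩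

lemma zero_mem_VS_Sys {n d k : ℕ} {a : ℕ} (hd : 1 ≤ d) (ha : a < n) :
    0 ∈ VS (Sys n d k) a := by
  rw [mem_VS_Sys]
  by_cases h : a < d
  · exact Or.inl ⟨h, rfl⟩
  · exact Or.inr (Or.inl ⟨not_lt.1 h, ha, rfl⟩)

lemma VS_Sys_zero {n d k : ℕ} (hd : 1 ≤ d) (hn : 1 ≤ n) (hk : 1 ≤ k) :
    VS (Sys n d k) 0 = Finset.range k := by
  ext x
  rw [mem_VS_Sys, Finset.mem_range]
  omega

lemma VS_Sys_pos {n d k : ℕ} {a : ℕ} (ha0 : 0 < a) (han : a < n) :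
    VS (Sys n d k) a = {0} := by
  ext x
  rw [mem_VS_Sys, Finset.mem_singleton]
  omega

lemma kS_Sys {n d k : ℕ} (hd : 1 ≤ d) (hn : 1 ≤ n) (hk : 1 ≤ k) (hdn : d ≤ n) :
    kS (Sys n d k) = k := by
  rw [kS, AS_Sys hd hdn]
  apply le_antisymm
  · apply Finset.sup_le
    intro a ha
    rcases Nat.eq_zero_or_pos a with rfl | hpos
    · rw [VS_Sys_zero hd hn hk, Finset.card_range]
    · rw [VS_Sys_pos hpos (Finset.mem_range.1 ha), Finset.card_singleton]; exact hk
  · calc k = (VS (Sys n d k) 0).card := by rw [VS_Sys_zero hd hn hk, Finset.card_range]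
      _ ≤ _ := Finset.le_sup (f := fun a => (VS (Sys n d k) a).card)
        (Finset.mem_range.2 hn)

lemma WFS_Sys {n d k : ℕ} : WFS (Sys n d k) := by
  refine ⟨⟨rr d, rr_mem⟩, ?_⟩
  intro r hr
  rcases mem_Sys.1 hr with rfl | ⟨i, h1, h2, rfl⟩ | ⟨m, h1, h2, rfl⟩
  · intro p hp q hq _
    rw [(mem_rr1.1 hp).2, (mem_rr1.1 hq).2]
  · intro p hp q hq _
    simp only [sR, Finset.mem_singleton] at hp hq
    rw [hp, hq]
  · intro p hp q hq _
    simp only [tR, Finset.mem_singleton] at hp hq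
    rw [hp, hq]

lemma SRred_Sys {n d k : ℕ} (hd : 1 ≤ d) : SRred (Sys n d k) := by
  intro r hr ⟨r', hr', hsub⟩
  have hne : r'.1.Nonempty := by
    rcases mem_Sys.1 hr' with rfl | ⟨i, h1, h2, rfl⟩ | ⟨m, h1, h2, rfl⟩
    · exact ⟨(0, 0), mem_rr1.2 ⟨hd, rfl⟩⟩
    · exact ⟨(i, 0), Finset.mem_singleton_self _⟩
    · exact ⟨(0, m), Finset.mem_singleton_self _⟩
  rcases mem_Sys.1 hr with rfl | ⟨i, h1, h2, rfl⟩ | ⟨m, h1, h2, rfl⟩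
  · -- r = rr d : r'.1 ⊂ (rr d).1
    rcases mem_Sys.1 hr' with rfl | ⟨i, h1, h2, rfl⟩ | ⟨m, h1, h2, rfl⟩
    · exact (ssubset_irrefl _) hsub
    · have h5 : i < d := (mem_rr1.1 (hsub.1 (Finset.mem_singleton_self (i, 0)))).1
      omega
    · have h5 : m = 0 := (mem_rr1.1 (hsub.1 (Finset.mem_singleton_self (0, m)))).2
      omega
  · -- r = sR i : r'.1 ⊂ {(i,0)}
    obtain ⟨p, hp⟩ := hne
    have hp' : p ∈ ({(i, 0)} : Finset (Attr × ℕ)) := hsub.1 hp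
    rw [Finset.mem_singleton] at hp'
    subst hp'
    exact hsub.2 (Finset.singleton_subset_iff.2 hp)
  · obtain ⟨p, hp⟩ := hne
    have hp' : p ∈ ({(0, m)} : Finset (Attr × ℕ)) := hsub.1 hp
    rw [Finset.mem_singleton] at hp'
    subst hp'
    exact hsub.2 (Finset.singleton_subset_iff.2 hp)

lemma ADred_Sys {n d k : ℕ} (hd : 1 ≤ d) : ADred (Sys n d k) := by
  intro r hr ⟨r', hr', hsub, _⟩
  exact SRred_Sys hd r hr ⟨r', hr', hsub⟩

/-- Decisions determine rules in `Sys`. -/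
lemma dec_inj_rr {n d k : ℕ} {r : Rule} (hd : 1 ≤ d) (hn : 1 ≤ n)
    (hr : r ∈ Sys n d k) (h : r.2 = 0) : r = rr d := by
  rcases mem_Sys.1 hr with rfl | ⟨i, h1, h2, rfl⟩ | ⟨m, h1, h2, rfl⟩
  · rfl
  · simp only [sR] at h; omega
  · simp only [tR] at h; omega

lemma dec_inj_sR {n d k i : ℕ} {r : Rule} (hd : 1 ≤ d) (h1 : d ≤ i) (h2 : i < n)
    (hr : r ∈ Sys n d k) (h : r.2 = i) : r = sR i := by
  rcases mem_Sys.1 hr with rfl | ⟨i', h1', h2', rfl⟩ | ⟨m, h1', h2', rfl⟩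
  · simp only [rr] at h; omega
  · simp only [sR] at h ⊢; rw [h]
  · simp only [tR] at h; omega

end Sys

section Lower

variable {n d k : ℕ}

lemma consistent_some0 {A : EqSys} (h : ∀ p ∈ A, p.2 = some 0) : Consistent A :=
  fun p hp q hq _ => by rw [h p hp, h q hq]

lemma consistent_singleton {q : Attr × Val} : Consistent ({q} : EqSys) :=
  fun p hp q' hq' _ => by rw [Finset.mem_singleton.1 hp, Finset.mem_singleton.1 hq']

lemma consistent_insert {K : EqSys} {a : Attr} {v : Val} (hK : Consistent K)
    (hfresh : ∀ w, (a, w) ∉ K) : Consistent (insert (a, v) K) := by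
  intro p hp q hq hpq
  rcases Finset.mem_insert.1 hp with rfl | hp
  · rcases Finset.mem_insert.1 hq with rfl | hq
    · rfl
    · exfalso
      apply hfresh q.2
      have hqe : q = (a, q.2) := by
        cases q with
        | mk b w => simp only [Prod.mk.injEq]; exact ⟨hpq.symm, trivial⟩
      rwa [← hqe]
  · rcases Finset.mem_insert.1 hq with rfl | hq
    · exfalso
      apply hfresh p.2
      have hpe : p = (a, p.2) := by
        cases p with
        | mk b w => simp only [Prod.mk.injEq]; exact ⟨hpq, trivial⟩
      rwa [← hpe]
    · exact hK p hp q hq hpq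

lemma extract {A K : EqSys} (hA : Consistent A) (hK : Consistent K)
    (h : ¬ Consistent (A ∪ K)) : ∃ p ∈ A, ∃ q ∈ K, p.1 = q.1 ∧ p.2 ≠ q.2 := by
  by_contra hno
  push_neg at hno
  apply h
  intro p hp q hq hpq
  rcases Finset.mem_union.1 hp with hp | hp <;> rcases Finset.mem_union.1 hq with hq | hq
  · exact hA p hp q hq hpq
  · exact hno p hp q hq hpq
  · exact (hno q hq p hp hpq.symm).symm
  · exact hK p hp q hq hpq

lemma card_of_attrs {K : EqSys} {n : ℕ} (h : ∀ a < n, ∃ v, (a, v) ∈ K) :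
    n ≤ K.card := by
  have hsub : Finset.range n ⊆ K.image Prod.fst := by
    intro a ha
    obtain ⟨v, hv⟩ := h a (Finset.mem_range.1 ha)
    exact Finset.mem_image.2 ⟨(a, v), hv, rfl⟩
  calc n = (Finset.range n).card := (Finset.card_range n).symm
    _ ≤ (K.image Prod.fst).card := Finset.card_le_card hsub
    _ ≤ K.card := Finset.card_image_le

/-! #### Adversary for the AR/AD problems: always answer `0`. -/

def Good1 : EqSys → Prop := fun K => ∀ p ∈ K, p.2 = some 0

lemma good1_empty : Good1 ∅ := by simp [Good1]

lemma good1_cons {K : EqSys} (h : Good1 K) : Consistent K := consistent_some0 h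

lemma good1_insert {K : EqSys} {a : Attr} (h : Good1 K) :
    Good1 (insert (a, (some 0 : Val)) K) := by
  intro p hp
  rcases Finset.mem_insert.1 hp with rfl | hp
  · rfl
  · exact h p hp

lemma good1_step_Bo (hd : 1 ≤ d) (hdn : d ≤ n) :
    ∀ a ∈ AS (Sys n d k), ∀ K, Good1 K →
      ∃ v ∈ Bo (Sys n d k) a, Good1 (insert (a, v) K) := by
  intro a ha K hK
  rw [AS_Sys hd hdn, Finset.mem_range] at ha
  exact ⟨some 0, some_mem_Bo (zero_mem_VS_Sys hd ha), good1_insert hK⟩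

lemma good1_step_Be (hd : 1 ≤ d) (hdn : d ≤ n) :
    ∀ a ∈ AS (Sys n d k), ∀ K, Good1 K →
      ∃ v ∈ Be (Sys n d k) a, Good1 (insert (a, v) K) := by
  intro a ha K hK
  rw [AS_Sys hd hdn, Finset.mem_range] at ha
  exact ⟨some 0, some_mem_Be (zero_mem_VS_Sys hd ha), good1_insert hK⟩

lemma alive_rr {K : EqSys} (hG : Good1 K) : Consistent (Kr (rr d) ∪ K) := by
  apply consistent_some0
  intro p hp
  rcases Finset.mem_union.1 hp with hp | hp
  · exact (mem_Kr_rr.1 hp).2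
  · exact hG p hp

lemma alive_sR {K : EqSys} {i : ℕ} (hG : Good1 K) : Consistent (Kr (sR i) ∪ K) := by
  apply consistent_some0
  intro p hp
  rcases Finset.mem_union.1 hp with hp | hp
  · rw [Kr_sR, Finset.mem_singleton] at hp; rw [hp]
  · exact hG p hp

lemma good1_attrs {K : EqSys} {Z : DRS} (hd : 1 ≤ d) (_hdn : d ≤ n) (hG : Good1 K)
    (hrr : rr d ∈ Z) (hsR : ∀ i, d ≤ i → i < n → sR i ∈ Z)
    (h1 : ∀ r ∈ Z, Kr r ⊆ K) : n ≤ K.card := by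
  apply card_of_attrs
  intro a ha
  by_cases h : a < d
  · exact ⟨some 0, h1 _ hrr (mem_Kr_rr.2 ⟨h, rfl⟩)⟩
  · exact ⟨some 0, h1 _ (hsR a (not_lt.1 h) ha)
      (by rw [Kr_sR]; exact Finset.mem_singleton_self _)⟩

lemma good1_card_AR {K : EqSys} {Z : DRS} (hd : 1 ≤ d) (hdn : d ≤ n) (hG : Good1 K)
    (_hZ : Z ⊆ Sys n d k) (hc : CondAR (Sys n d k) K Z) : n ≤ K.card := by
  apply good1_attrs hd hdn hG ?_ ?_ hc.1
  · by_contra hno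
    exact hc.2 (rr d) rr_mem hno (alive_rr hG)
  · intro i hi1 hi2
    by_contra hno
    exact hc.2 (sR i) (sR_mem hi1 hi2) hno (alive_sR hG)

lemma good1_card_AD {K : EqSys} {Z : DRS} (hd : 1 ≤ d) (hdn : d ≤ n) (hn : 1 ≤ n)
    (hG : Good1 K) (hZ : Z ⊆ Sys n d k) (hc : CondAD (Sys n d k) K Z) :
    n ≤ K.card := by
  apply good1_attrs hd hdn hG ?_ ?_ hc.1
  · have hdec : (rr d).2 ∈ Z.image Prod.snd := by
      by_contra hno
      exact hc.2 (rr d) rr_mem hno (alive_rr hG)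
    obtain ⟨r', hr', hr2⟩ := Finset.mem_image.1 hdec
    have : r' = rr d := dec_inj_rr hd hn (hZ hr') hr2
    exact this ▸ hr'
  · intro i hi1 hi2
    have hdec : (sR i).2 ∈ Z.image Prod.snd := by
      by_contra hno
      exact hc.2 (sR i) (sR_mem hi1 hi2) hno (alive_sR hG)
    obtain ⟨r', hr', hr2⟩ := Finset.mem_image.1 hdec
    have : r' = sR i := dec_inj_sR hd hi1 hi2 (hZ hr') hr2
    exact this ▸ hr'

/-! #### Adversary for the ESR problem. -/

def Good2 (d : ℕ) (K : EqSys) : Prop :=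
  Consistent K ∧
  (∀ p ∈ K, (p.1 < d → p.2 = some 0 ∨ p.2 = none) ∧ (d ≤ p.1 → p.2 = none)) ∧
  (∀ p ∈ K, p.2 = none → p.1 < d → ∀ j, j < d → j ≠ p.1 →
    ((j, (some 0 : Val)) ∈ K)) ∧
  ¬ ∀ j, j < d → ((j, (some 0 : Val)) ∈ K)

lemma good2_empty (hd : 1 ≤ d) : Good2 d ∅ :=
  ⟨by intro p hp _ _ _; exact absurd hp (Finset.notMem_empty p),
   by intro p hp; exact absurd hp (Finset.notMem_empty p),
   by intro p hp; exact absurd hp (Finset.notMem_empty p),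
   fun h => absurd (h 0 hd) (Finset.notMem_empty _)⟩

lemma good2_step (hd : 1 ≤ d) (hdn : d ≤ n) :
    ∀ a ∈ AS (Sys n d k), ∀ K, Good2 d K →
      ∃ v ∈ Be (Sys n d k) a, Good2 d (insert (a, v) K) := by
  intro a ha K hK
  rw [AS_Sys hd hdn, Finset.mem_range] at ha
  obtain ⟨hcons, hvals, hlast, hnall⟩ := hK
  by_cases hrep : ∃ v, (a, v) ∈ K
  · obtain ⟨v, hv⟩ := hrep
    have hins : insert (a, v) K = K := Finset.insert_eq_self.2 hv
    refine ⟨v, ?_, by rw [hins]; exact ⟨hcons, hvals, hlast, hnall⟩⟩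
    obtain ⟨h1, h2⟩ := hvals (a, v) hv
    by_cases had : a < d
    · rcases h1 had with h' | h'
      · have hv2 : v = some 0 := h'
        rw [hv2]; exact some_mem_Be (zero_mem_VS_Sys hd ha)
      · have hv2 : v = none := h'
        rw [hv2]; exact Finset.mem_insert_self _ _
    · have hv2 : v = none := h2 (not_lt.1 had)
      rw [hv2]; exact Finset.mem_insert_self _ _
  · push_neg at hrep
    by_cases had : d ≤ a
    · -- answer `*`
      refine ⟨none, Finset.mem_insert_self _ _,
        consistent_insert hcons hrep, ?_, ?_, ?_⟩
      · intro p hp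
        rcases Finset.mem_insert.1 hp with rfl | hp
        · exact ⟨fun h => absurd h (Nat.not_lt.2 had), fun _ => rfl⟩
        · exact hvals p hp
      · intro p hp hpn hpd j hj hja
        rcases Finset.mem_insert.1 hp with rfl | hp
        · exact absurd hpd (Nat.not_lt.2 had)
        · exact Finset.mem_insert_of_mem (hlast p hp hpn hpd j hj hja)
      · intro hall
        apply hnall
        intro j hj
        rcases Finset.mem_insert.1 (hall j hj) with h | h
        · simp at h
        · exact h
    · push_neg at had
      by_cases hcov : ∀ j, j < d → j ≠ a → ((j, (some 0 : Val)) ∈ K)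
      · -- answer `*`
        refine ⟨none, Finset.mem_insert_self _ _,
          consistent_insert hcons hrep, ?_, ?_, ?_⟩
        · intro p hp
          rcases Finset.mem_insert.1 hp with rfl | hp
          · exact ⟨fun _ => Or.inr rfl, fun h => absurd h (Nat.not_le.2 had)⟩
          · exact hvals p hp
        · intro p hp hpn hpd j hj hja
          rcases Finset.mem_insert.1 hp with rfl | hp
          · exact Finset.mem_insert_of_mem (hcov j hj hja)
          · exact Finset.mem_insert_of_mem (hlast p hp hpn hpd j hj hja)
        · intro hall
          rcases Finset.mem_insert.1 (hall a had) with h | h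
          · simp at h
          · exact hrep (some 0) h
      · -- answer `0`
        push_neg at hcov
        obtain ⟨j0, hj0d, hj0a, hj0⟩ := hcov
        refine ⟨some 0, some_mem_Be (zero_mem_VS_Sys hd ha),
          consistent_insert hcons hrep, ?_, ?_, ?_⟩
        · intro p hp
          rcases Finset.mem_insert.1 hp with rfl | hp
          · exact ⟨fun _ => Or.inl rfl, fun h => absurd h (Nat.not_le.2 had)⟩
          · exact hvals p hp
        · intro p hp hpn hpd j hj hja
          rcases Finset.mem_insert.1 hp with rfl | hp
          · simp at hpn
          · by_cases hj' : j = a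
            · subst hj'; exact Finset.mem_insert_self _ _
            · exact Finset.mem_insert_of_mem (hlast p hp hpn hpd j hj hja)
        · intro hall
          apply hj0
          rcases Finset.mem_insert.1 (hall j0 hj0d) with h | h
          · exact absurd (congrArg Prod.fst h) hj0a
          · exact h

lemma good2_card (hd : 1 ≤ d) (hdn : d ≤ n) {K : EqSys} {Z : DRS}
    (hG : Good2 d K) (hZ : Z ⊆ Sys n d k) (hc : CondSR (Sys n d k) K Z) :
    n ≤ K.card := by
  obtain ⟨hcons, hvals, hlast, hnall⟩ := hG
  have hZe : Z = ∅ := by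
    rcases Finset.eq_empty_or_nonempty Z with h | ⟨r, hr⟩
    · exact h
    exfalso
    have hKr := hc.1 r hr
    rcases mem_Sys.1 (hZ hr) with rfl | ⟨i, h1, h2, rfl⟩ | ⟨m, h1, h2, rfl⟩
    · exact hnall (fun j hj => hKr (mem_Kr_rr.2 ⟨hj, rfl⟩))
    · have hv := (hvals (i, some 0)
        (hKr (by rw [Kr_sR]; exact Finset.mem_singleton_self _))).2 h1
      simp at hv
    · have hv := (hvals (0, some m)
        (hKr (by rw [Kr_tR]; exact Finset.mem_singleton_self _))).1 hd
      rcases hv with h | h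
      · have hm := Option.some_injective _ h
        omega
      · simp at h
  have hall := hc.2 hZe
  apply card_of_attrs
  intro a ha
  by_cases h : a < d
  · -- refutation of `rr d` pins down all attributes `< d`
    have hbad := hall (rr d) rr_mem
    obtain ⟨p, hp, q, hq, hpq, hne⟩ :=
      extract (consistent_some0 (fun p hp => (mem_Kr_rr.1 hp).2)) hcons hbad
    obtain ⟨hpd, hp0⟩ := mem_Kr_rr.1 hp
    have hq0 : q.2 ≠ some 0 := by rw [← hp0]; exact fun h' => hne h'.symm
    have hqd : q.1 < d := hpq ▸ hpd
    have hqn : q.2 = none := by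
      rcases (hvals q hq).1 hqd with h' | h'
      · exact absurd h' hq0
      · exact h'
    by_cases hqa : a = q.1
    · refine ⟨q.2, ?_⟩
      have : (a, q.2) = q := by
        cases q with
        | mk b w => simp only [Prod.mk.injEq]; exact ⟨hqa, trivial⟩
      rwa [this]
    · exact ⟨some 0, hlast q hq hqn hqd a h hqa⟩
  · -- refutation of `sR a`
    have hbad := hall (sR a) (sR_mem (not_lt.1 h) ha)
    rw [Kr_sR] at hbad
    obtain ⟨p, hp, q, hq, hpq, _⟩ := extract consistent_singleton hcons hbad
    rw [Finset.mem_singleton] at hp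
    subst hp
    refine ⟨q.2, ?_⟩
    have : (a, q.2) = q := by
      cases q with
      | mk b w => simp only [Prod.mk.injEq]; exact ⟨hpq, trivial⟩
    rwa [this]

end Lower

section Assembly

variable {n d k : ℕ}

lemma hESR_Sys (hd : 1 ≤ d) (hdn : d ≤ n) : hESR (Sys n d k) = n := by
  have hub := hgen_le CondSR Be (Sys n d k) (hcSR _) (fun a _ => Be_nonempty)
  have hlb := le_hgen CondSR Be (Sys n d k) n (Good2 d) (good2_empty hd)
    (good2_step hd hdn) (fun K hK => hK.1)
    (fun K Z hG hZ hc => good2_card hd hdn hG hZ hc)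
    ⟨nS (Sys n d k), nS_mem_hgenSet _ _ _ (hcSR _) (fun a _ => Be_nonempty)⟩
  rw [nS_Sys hd hdn] at hub
  rw [hESR]
  omega

lemma hAR_Sys (hd : 1 ≤ d) (hdn : d ≤ n) : hAR (Sys n d k) = n := by
  have hub := hgen_le CondAR Bo (Sys n d k) (hcAR _) (fun a ha => Bo_nonempty ha)
  have hlb := le_hgen CondAR Bo (Sys n d k) n Good1 good1_empty
    (good1_step_Bo hd hdn) (fun K hK => good1_cons hK)
    (fun K Z hG hZ hc => good1_card_AR hd hdn hG hZ hc)
    ⟨nS (Sys n d k), nS_mem_hgenSet _ _ _ (hcAR _) (fun a ha => Bo_nonempty ha)⟩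
  rw [nS_Sys hd hdn] at hub
  rw [hAR]
  omega

lemma hEAR_Sys (hd : 1 ≤ d) (hdn : d ≤ n) : hEAR (Sys n d k) = n := by
  have hub := hgen_le CondAR Be (Sys n d k) (hcAR _) (fun a _ => Be_nonempty)
  have hlb := le_hgen CondAR Be (Sys n d k) n Good1 good1_empty
    (good1_step_Be hd hdn) (fun K hK => good1_cons hK)
    (fun K Z hG hZ hc => good1_card_AR hd hdn hG hZ hc)
    ⟨nS (Sys n d k), nS_mem_hgenSet _ _ _ (hcAR _) (fun a _ => Be_nonempty)⟩
  rw [nS_Sys hd hdn] at hub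
  rw [hEAR]
  omega

lemma hAD_Sys (hd : 1 ≤ d) (hdn : d ≤ n) (hn : 1 ≤ n) : hAD (Sys n d k) = n := by
  have hub := hgen_le CondAD Bo (Sys n d k) (hcAD _) (fun a ha => Bo_nonempty ha)
  have hlb := le_hgen CondAD Bo (Sys n d k) n Good1 good1_empty
    (good1_step_Bo hd hdn) (fun K hK => good1_cons hK)
    (fun K Z hG hZ hc => good1_card_AD hd hdn hn hG hZ hc)
    ⟨nS (Sys n d k), nS_mem_hgenSet _ _ _ (hcAD _) (fun a ha => Bo_nonempty ha)⟩
  rw [nS_Sys hd hdn] at hub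
  rw [hAD]
  omega

lemma hEAD_Sys (hd : 1 ≤ d) (hdn : d ≤ n) (hn : 1 ≤ n) : hEAD (Sys n d k) = n := by
  have hub := hgen_le CondAD Be (Sys n d k) (hcAD _) (fun a _ => Be_nonempty)
  have hlb := le_hgen CondAD Be (Sys n d k) n Good1 good1_empty
    (good1_step_Be hd hdn) (fun K hK => good1_cons hK)
    (fun K Z hG hZ hc => good1_card_AD hd hdn hn hG hZ hc)
    ⟨nS (Sys n d k), nS_mem_hgenSet _ _ _ (hcAD _) (fun a _ => Be_nonempty)⟩
  rw [nS_Sys hd hdn] at hub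
  rw [hEAD]
  omega

lemma Hmax_eq {h : DRS → ℕ} {n d k : ℕ}
    (hub : ∀ S, h S ≤ nS S)
    (S0 : DRS) (h1 : WFS S0) (h2 : nS S0 = n) (h3 : dS S0 = d) (h4 : kS S0 = k)
    (h5 : h S0 = n) : Hmax h n d k = n := by
  apply IsGreatest.csSup_eq
  constructor
  · exact ⟨S0, h1, h2, h3, h4, h5⟩
  · rintro m ⟨S', _, hn', _, _, hm⟩
    rw [← hm, ← hn']
    exact hub S'

lemma HmaxR_eq {h : DRS → ℕ} {P : DRS → Prop} {n d k : ℕ}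
    (hub : ∀ S, h S ≤ nS S)
    (S0 : DRS) (h1 : WFS S0) (hP : P S0) (h2 : nS S0 = n) (h3 : dS S0 = d)
    (h4 : kS S0 = k) (h5 : h S0 = n) : HmaxR h P n d k = n := by
  apply IsGreatest.csSup_eq
  constructor
  · exact ⟨S0, h1, hP, h2, h3, h4, h5⟩
  · rintro m ⟨S', _, _, hn', _, _, hm⟩
    rw [← hm, ← hn']
    exact hub S'

lemma hAR_ub : ∀ S, hAR S ≤ nS S :=
  fun S => hgen_le CondAR Bo S (hcAR S) (fun _ ha => Bo_nonempty ha)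
lemma hEAR_ub : ∀ S, hEAR S ≤ nS S :=
  fun S => hgen_le CondAR Be S (hcAR S) (fun _ _ => Be_nonempty)
lemma hAD_ub : ∀ S, hAD S ≤ nS S :=
  fun S => hgen_le CondAD Bo S (hcAD S) (fun _ ha => Bo_nonempty ha)
lemma hEAD_ub : ∀ S, hEAD S ≤ nS S :=
  fun S => hgen_le CondAD Be S (hcAD S) (fun _ _ => Be_nonempty)
lemma hESR_ub : ∀ S, hESR S ≤ nS S :=
  fun S => hgen_le CondSR Be S (hcSR S) (fun _ _ => Be_nonempty)

end Assembly

/-- the eight upper-bound functions all equal `n`. -/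
theorem stmt10 (n d k : ℕ) (hn : 0 < n) (hd : 0 < d) (hk : 0 < k) (hdn : d ≤ n) :
    HmaxR hESR SRred n d k = n ∧ HmaxR hAD ADred n d k = n ∧
    HmaxR hEAD ADred n d k = n ∧ Hmax hAD n d k = n ∧ Hmax hAR n d k = n ∧
    Hmax hESR n d k = n ∧ Hmax hEAD n d k = n ∧ Hmax hEAR n d k = n := by
  have hd' : 1 ≤ d := hd
  have hn' : 1 ≤ n := hn
  have hk' : 1 ≤ k := hk
  have hW : WFS (Sys n d k) := WFS_Sys
  have h2 : nS (Sys n d k) = n := nS_Sys hd' hdn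
  have h3 : dS (Sys n d k) = d := dS_Sys hd'
  have h4 : kS (Sys n d k) = k := kS_Sys hd' hn' hk' hdn
  refine ⟨?_, ?_, ?_, ?_, ?_, ?_, ?_, ?_⟩
  · exact HmaxR_eq hESR_ub _ hW (SRred_Sys hd') h2 h3 h4 (hESR_Sys hd' hdn)
  · exact HmaxR_eq hAD_ub _ hW (ADred_Sys hd') h2 h3 h4 (hAD_Sys hd' hdn hn')
  · exact HmaxR_eq hEAD_ub _ hW (ADred_Sys hd') h2 h3 h4 (hEAD_Sys hd' hdn hn')
  · exact Hmax_eq hAD_ub _ hW h2 h3 h4 (hAD_Sys hd' hdn hn')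
  · exact Hmax_eq hAR_ub _ hW h2 h3 h4 (hAR_Sys hd' hdn)
  · exact Hmax_eq hESR_ub _ hW h2 h3 h4 (hESR_Sys hd' hdn)
  · exact Hmax_eq hEAD_ub _ hW h2 h3 h4 (hEAD_Sys hd' hdn hn')
  · exact Hmax_eq hEAR_ub _ hW h2 h3 h4 (hEAR_Sys hd' hdn)
end
end

section
/- Let S be a decision rule system and S′ a nonempty subsystem of S. Then h_AR(S) ≥ h_AR(S′). -/
open scoped Classical
noncomputable section

/-! ### Auxiliary development for Statement 13 -/

def defVal (S : DRS) (a : Attr) : Val := some (sInf {n : ℕ | n ∈ VS S a})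

lemma VS_nonempty_of_mem_AS {S : DRS} {a : Attr} (h : a ∈ AS S) : ∃ x, x ∈ VS S a := by
  rcases Finset.mem_biUnion.1 h with ⟨r, hr, ha⟩
  rcases Finset.mem_image.1 ha with ⟨p, hp, hpa⟩
  exact ⟨p.2, Finset.mem_biUnion.2 ⟨r, hr,
    Finset.mem_image.2 ⟨p, Finset.mem_filter.2 ⟨hp, hpa⟩, rfl⟩⟩⟩

lemma defVal_mem {S : DRS} {a : Attr} (h : a ∈ AS S) : defVal S a ∈ Bo S a := by
  have hne : {n : ℕ | n ∈ VS S a}.Nonempty := VS_nonempty_of_mem_AS h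
  exact Finset.mem_image.2 ⟨_, Nat.sInf_mem hne, rfl⟩

lemma VS_mono {S S' : DRS} (hsub : S' ⊆ S) (a : Attr) : VS S' a ⊆ VS S a :=
  Finset.biUnion_subset_biUnion_of_subset_left _ hsub

lemma Bo_mono {S S' : DRS} (hsub : S' ⊆ S) (a : Attr) : Bo S' a ⊆ Bo S a :=
  Finset.image_subset_image (VS_mono hsub a)

lemma Ar_subset_AS {S : DRS} {r : Rule} (hr : r ∈ S) : Ar r ⊆ AS S :=
  Finset.subset_biUnion_of_mem Ar hr

lemma Kr_fst_mem {r : Rule} {p : Attr × Val} (hp : p ∈ Kr r) : p.1 ∈ Ar r := by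
  rcases Finset.mem_image.1 hp with ⟨q, hq, rfl⟩
  exact Finset.mem_image.2 ⟨q, hq, rfl⟩

lemma path_attr {B : Attr → Finset Val} {S : DRS} :
    ∀ {T K Z}, PathT B T K Z → TreeOver B S T → ∀ p ∈ K, p.1 ∈ AS S := by
  intro T K Z h
  induction h with
  | leaf Z => intro _ p hp; simp at hp
  | node a c v K Z hv _ ih =>
      intro hT p hp
      rcases hT with ⟨ha, hc⟩
      rcases Finset.mem_insert.1 hp with rfl | hp
      · exact ha
      · exact ih (hc v hv) p hp

lemma path_leaf_inv {B : Attr → Finset Val} {Z0 : DRS} {K : EqSys} {Z : DRS}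
    (h : PathT B (.leaf Z0) K Z) : K = ∅ ∧ Z = Z0 := by
  cases h; exact ⟨rfl, rfl⟩

lemma path_node_inv {B : Attr → Finset Val} {a : Attr} {c : Val → DTree} {K : EqSys} {Z : DRS}
    (h : PathT B (.node a c) K Z) :
    ∃ v K₁, v ∈ B a ∧ PathT B (c v) K₁ Z ∧ K = insert (a, v) K₁ := by
  cases h with
  | node _ _ v K₁ _ hv hp => exact ⟨v, K₁, hv, hp, rfl⟩

/-- Prune a tree over `S` to a tree over the subsystem `S'`. -/
def trimT (S S' : DRS) : DTree → DTree
  | .leaf Z => .leaf (Z ∩ S')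
  | .node a c =>
      if a ∈ AS S' then .node a fun v => trimT S S' (c v)
      else trimT S S' (c (defVal S a))

lemma trimT_over {S S' : DRS} (hsub : S' ⊆ S) :
    ∀ Γ, TreeOver (Bo S) S Γ → TreeOver (Bo S') S' (trimT S S' Γ) := by
  intro Γ
  induction Γ with
  | leaf Z =>
      intro _; simpa [trimT, TreeOver] using Finset.inter_subset_right
  | node a c ih =>
      intro hT
      rcases hT with ⟨ha, hc⟩
      by_cases h : a ∈ AS S'
      · simp only [trimT, if_pos h]
        exact ⟨h, fun v hv => ih v (hc v (Bo_mono hsub a hv))⟩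
      · simp only [trimT, if_neg h]
        exact ih _ (hc _ (defVal_mem ha))

lemma trimT_depth {S S' : DRS} (hsub : S' ⊆ S) :
    ∀ Γ, TreeOver (Bo S) S Γ → depthT (Bo S') (trimT S S' Γ) ≤ depthT (Bo S) Γ := by
  intro Γ
  induction Γ with
  | leaf Z => intro _; simp [trimT, depthT]
  | node a c ih =>
      intro hT
      rcases hT with ⟨ha, hc⟩
      by_cases h : a ∈ AS S'
      · simp only [trimT, if_pos h, depthT]
        refine Nat.succ_le_succ (Finset.sup_le fun v hv => ?_)
        have hvS : v ∈ Bo S a := Bo_mono hsub a hv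
        exact le_trans (ih v (hc v hvS))
          (Finset.le_sup (f := fun v => depthT (Bo S) (c v)) hvS)
      · simp only [trimT, if_neg h, depthT]
        refine le_trans (ih _ (hc _ (defVal_mem ha))) (le_trans ?_ (Nat.le_succ _))
        exact Finset.le_sup (f := fun v => depthT (Bo S) (c v)) (defVal_mem ha)

lemma trimT_path {S S' : DRS} (hsub : S' ⊆ S) :
    ∀ Γ, TreeOver (Bo S) S Γ → ∀ K' Z', PathT (Bo S') (trimT S S' Γ) K' Z' →
      ∃ E Z, PathT (Bo S) Γ (K' ∪ E) Z ∧ Z' = Z ∩ S' ∧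
        ∀ p ∈ (E : EqSys), p.1 ∉ AS S' ∧ p.2 = defVal S p.1 := by
  intro Γ
  induction Γ with
  | leaf Z0 =>
      intro _ K' Z' hp
      simp only [trimT] at hp
      obtain ⟨rfl, rfl⟩ := path_leaf_inv hp
      exact ⟨∅, Z0, by simpa using PathT.leaf (B := Bo S) Z0, rfl, by simp⟩
  | node a c ih =>
      intro hT K' Z' hp
      rcases hT with ⟨ha, hc⟩
      by_cases h : a ∈ AS S'
      · simp only [trimT, if_pos h] at hp
        obtain ⟨v, K, hv, hpath, rfl⟩ := path_node_inv hp
        have hvS : v ∈ Bo S a := Bo_mono hsub a hv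
        rcases ih v (hc v hvS) K Z' hpath with ⟨E, Z0, hP, hZ, hE⟩
        refine ⟨E, Z0, ?_, hZ, hE⟩
        rw [Finset.insert_union]
        exact PathT.node a c v _ Z0 hvS hP
      · simp only [trimT, if_neg h] at hp
        rcases ih _ (hc _ (defVal_mem ha)) K' Z' hp with ⟨E, Z0, hP, hZ, hE⟩
        refine ⟨insert (a, defVal S a) E, Z0, ?_, hZ, ?_⟩
        · rw [Finset.union_insert]
          exact PathT.node a c (defVal S a) _ Z0 (defVal_mem ha) hP
        · intro p hp'
          rcases Finset.mem_insert.1 hp' with rfl | hp'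
          · exact ⟨h, rfl⟩
          · exact hE p hp'

lemma trimT_solves {S S' : DRS} (hsub : S' ⊆ S) (Γ : DTree)
    (hT : TreeOver (Bo S) S Γ) (hSol : Solves (CondAR S) (Bo S) Γ) :
    Solves (CondAR S') (Bo S') (trimT S S' Γ) := by
  intro K' Z' hp hcons
  rcases trimT_path hsub Γ hT K' Z' hp with ⟨E, Z, hP, rfl, hE⟩
  have hK'attr : ∀ p ∈ K', p.1 ∈ AS S' :=
    path_attr hp (trimT_over hsub Γ hT)
  -- consistency of K' ∪ E
  have hconsKE : Consistent (K' ∪ E) := by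
    intro p hp' q hq' heq
    rcases Finset.mem_union.1 hp' with hpK | hpE <;>
      rcases Finset.mem_union.1 hq' with hqK | hqE
    · exact hcons p hpK q hqK heq
    · exact absurd ((heq ▸ hK'attr p hpK)) (hE q hqE).1
    · exact absurd (by rw [heq]; exact hK'attr q hqK) (hE p hpE).1
    · rw [(hE p hpE).2, (hE q hqE).2, heq]
  have hcond := hSol _ _ hP hconsKE
  rcases hcond with ⟨h1, h2⟩
  constructor
  · intro r hr p hp'
    have hrS' : r ∈ S' := (Finset.mem_inter.1 hr).2
    have hpKE : p ∈ K' ∪ E := h1 r (Finset.mem_inter.1 hr).1 hp'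
    rcases Finset.mem_union.1 hpKE with hK | hEm
    · exact hK
    · exact absurd (Ar_subset_AS hrS' (Kr_fst_mem hp')) (hE p hEm).1
  · intro r hrS' hrZ hconsr
    have hrS : r ∈ S := hsub hrS'
    have hrnZ : r ∉ Z := fun hz => hrZ (Finset.mem_inter.2 ⟨hz, hrS'⟩)
    apply h2 r hrS hrnZ
    -- show Consistent (Kr r ∪ (K' ∪ E)) from Consistent (Kr r ∪ K')
    intro p hp' q hq' heq
    have attrIn : ∀ x ∈ Kr r ∪ K', x.1 ∈ AS S' := by
      intro x hx
      rcases Finset.mem_union.1 hx with hx | hx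
      · exact Ar_subset_AS hrS' (Kr_fst_mem hx)
      · exact hK'attr x hx
    have split : ∀ x, x ∈ Kr r ∪ (K' ∪ E) → x ∈ Kr r ∪ K' ∨ x ∈ E := by
      intro x hx
      rcases Finset.mem_union.1 hx with hx | hx
      · exact Or.inl (Finset.mem_union_left _ hx)
      · rcases Finset.mem_union.1 hx with hx | hx
        · exact Or.inl (Finset.mem_union_right _ hx)
        · exact Or.inr hx
    rcases split p hp' with hpI | hpE <;> rcases split q hq' with hqI | hqE
    · exact hconsr p hpI q hqI heq
    · exact absurd (heq ▸ attrIn p hpI) (hE q hqE).1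
    · exact absurd (by rw [heq]; exact attrIn q hqI) (hE p hpE).1
    · rw [(hE p hpE).2, (hE q hqE).2, heq]

/-! A solving tree always exists: the full tree over all attributes. -/

def fullT (S : DRS) : List Attr → EqSys → DTree
  | [], K => .leaf (S.filter fun r => Kr r ⊆ K)
  | a :: l, K => .node a fun v => fullT S l (insert (a, v) K)

lemma fullT_over (S : DRS) : ∀ l : List Attr, (∀ a ∈ l, a ∈ AS S) → ∀ K,
    TreeOver (Bo S) S (fullT S l K) := by
  intro l
  induction l with
  | nil => intro _ K; exact Finset.filter_subset _ _
  | cons a l ih =>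
      intro hmem K
      exact ⟨hmem a List.mem_cons_self,
        fun v _ => ih (fun b hb => hmem b (List.mem_cons_of_mem a hb)) _⟩

lemma fullT_path (S : DRS) : ∀ l : List Attr, ∀ K₀ K Z,
    PathT (Bo S) (fullT S l K₀) K Z →
      Z = S.filter (fun r => Kr r ⊆ K ∪ K₀) ∧
      ∀ a ∈ l, ∃ y, y ∈ VS S a ∧ (a, some y) ∈ K := by
  intro l
  induction l with
  | nil =>
      intro K₀ K Z hp
      obtain ⟨rfl, rfl⟩ := path_leaf_inv hp
      exact ⟨by simp, by simp⟩
  | cons a l ih =>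
      intro K₀ K Z hp
      obtain ⟨v, K₁, hv, hpath, rfl⟩ := path_node_inv hp
      rcases ih _ K₁ Z hpath with ⟨hZ, hall⟩
      rcases Finset.mem_image.1 hv with ⟨y, hy, rfl⟩
      have hKeq : K₁ ∪ insert (a, some y) K₀ = insert (a, some y) K₁ ∪ K₀ := by
        rw [Finset.union_insert, Finset.insert_union]
      constructor
      · rw [hZ, hKeq]
      · intro b hb
        rcases List.mem_cons.1 hb with rfl | hb
        · exact ⟨y, hy, Finset.mem_insert_self _ _⟩
        · rcases hall b hb with ⟨y', hy', hmem⟩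
          exact ⟨y', hy', Finset.mem_insert_of_mem hmem⟩

lemma fullT_solves (S : DRS) :
    Solves (CondAR S) (Bo S) (fullT S (AS S).toList ∅) := by
  intro K Z hp hcons
  rcases fullT_path S _ ∅ K Z hp with ⟨hZ, hall⟩
  rw [Finset.union_empty] at hZ
  subst hZ
  constructor
  · intro r hr
    exact (Finset.mem_filter.1 hr).2
  · intro r hrS hrZ hconsr
    have hnsub : ¬ (Kr r ⊆ K) := fun hsub => hrZ (Finset.mem_filter.2 ⟨hrS, hsub⟩)
    rcases Finset.not_subset.1 hnsub with ⟨p, hpKr, hpK⟩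
    rcases Finset.mem_image.1 hpKr with ⟨q, hq, rfl⟩
    have hbAS : q.1 ∈ AS S :=
      Ar_subset_AS hrS (Finset.mem_image.2 ⟨q, hq, rfl⟩)
    rcases hall q.1 (Finset.mem_toList.2 hbAS) with ⟨y, _, hyK⟩
    have h1 : (q.1, (some q.2 : Val)) ∈ Kr r ∪ K := Finset.mem_union_left _ hpKr
    have h2 : (q.1, (some y : Val)) ∈ Kr r ∪ K := Finset.mem_union_right _ hyK
    have := hconsr _ h1 _ h2 rfl
    simp only [Option.some.injEq] at this
    exact hpK (this ▸ hyK)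

lemma hAR_set_nonempty (S : DRS) :
    {m | ∃ Γ, TreeOver (Bo S) S Γ ∧ Solves (CondAR S) (Bo S) Γ ∧ depthT (Bo S) Γ = m}.Nonempty := by
  refine ⟨_, fullT S (AS S).toList ∅, ?_, fullT_solves S, rfl⟩
  exact fullT_over S _ (fun a ha => Finset.mem_toList.1 ha) ∅

/-- `h_AR(S) ≥ h_AR(S')` for a nonempty subsystem `S' ⊆ S`. -/
theorem stmt13 (S S' : DRS) (hS : WFS S) (hsub : S' ⊆ S) (hne : S'.Nonempty) :
    hAR S' ≤ hAR S := by
  have hmem := Nat.sInf_mem (hAR_set_nonempty S)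
  rcases hmem with ⟨Γ, hT, hSol, hd⟩
  have hT' := trimT_over hsub Γ hT
  have hSol' := trimT_solves hsub Γ hT hSol
  have hd' := trimT_depth (S := S) (S' := S') hsub Γ hT
  have : hAR S' ≤ depthT (Bo S') (trimT S S' Γ) :=
    Nat.sInf_le ⟨trimT S S' Γ, hT', hSol', rfl⟩
  calc hAR S' ≤ depthT (Bo S') (trimT S S' Γ) := this
    _ ≤ depthT (Bo S) Γ := hd'
    _ = hAR S := hd
end
end
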